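/- Fix h ∈ ℝ with κ(h) > 0, M ≥ 0, f ∈ C(M), and set δ = min{1/8, 1/(8|h|), 1/(8M)} and β(f) = f''(1). Define U₁(u) = κ(h)f(u) + (2h/3)uf'(u) + u²f''(u) and U₂(u) = 2κ(h)uf(u) + (h/3 − 1)u²f'(u) + (2u² + u³)·f'(u)/(u−1) − u³f''(u), with f'(u)/(u−1) extended continuously at u = 1 by f''(1). Then: (i) U₁(u) ≥ κ(h) + β(f)/4 for all u ∈ U(δ); (ii) the functions V₁(u) = (2U₁(u) − U₂(u))/U₁(u) and V₂(u) = (κ(h) + β(f)) u / U₁(u) are well-defined and C¹ on U(δ), with V₁(1) = 0, V₂(1) = 1, and V₂(u) > 0 on U(δ); (iii) there exists a constant C₀ depending only on h and M such that |Vᵢ(u)| ≤ C₀ and |Vᵢ'(u)| ≤ C₀ for all u ∈ U(δ) and i = 1,2. -/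

import Mathlib

open Set

noncomputable section

/-- `κ(h) = (h/3)(h/3 − 1)`. -/
def kap (h : ℝ) : ℝ := (h / 3) * (h / 3 - 1)

/-- The interval `U(1/8) = [7/8, 9/8]`. -/
def Iset : Set ℝ := Set.Icc (7/8 : ℝ) (9/8)

/-- The interval `U(a) = {u : |u − 1| ≤ a}`. -/
def Uset (a : ℝ) : Set ℝ := Set.Icc (1 - a) (1 + a)

/-- First derivative of `f` on `U(1/8)`. -/
noncomputable def d1 (f : ℝ → ℝ) : ℝ → ℝ := derivWithin f Iset

/-- Second derivative of `f` on `U(1/8)`. -/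
noncomputable def d2 (f : ℝ → ℝ) : ℝ → ℝ := derivWithin (d1 f) Iset

/-- Third derivative of `f` on `U(1/8)`. -/
noncomputable def d3 (f : ℝ → ℝ) : ℝ → ℝ := derivWithin (d2 f) Iset

/-- The class `C(M)`: `f` is C³ on `U(1/8)`, `f(1) = 1`, `f'(1) = 0`, `f''(1) > 0`,
and `|f'''| ≤ M f''(1)` on `U(1/8)`. -/
def CM (M : ℝ) (f : ℝ → ℝ) : Prop :=
  ContDiffOn ℝ 3 f Iset ∧ f 1 = 1 ∧ d1 f 1 = 0 ∧ 0 < d2 f 1 ∧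
    ∀ u ∈ Iset, |d3 f u| ≤ M * d2 f 1

/-- `δ = min{1/8, 1/(8|h|), 1/(8M)}`, where for `M = 0` the term `1/(8M)` is
interpreted as `+∞`. -/
noncomputable def del (h M : ℝ) : ℝ :=
  if M = 0 then min (1/8) (1 / (8 * |h|))
  else min (1/8) (min (1 / (8 * |h|)) (1 / (8 * M)))

/-- The quotient `f'(u)/(u−1)`, extended continuously at `u = 1` by `f''(1)`. -/
noncomputable def Qf (f : ℝ → ℝ) (u : ℝ) : ℝ :=
  if u = 1 then d2 f 1 else d1 f u / (u - 1)

/-- `U₁(u) = κ(h)f(u) + (2h/3)uf'(u) + u²f''(u)`. -/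
noncomputable def U1 (h : ℝ) (f : ℝ → ℝ) (u : ℝ) : ℝ :=
  kap h * f u + (2 * h / 3) * u * d1 f u + u ^ 2 * d2 f u

/-- `U₂(u) = 2κ(h)uf(u) + (h/3 − 1)u²f'(u) + (2u² + u³)f'(u)/(u−1) − u³f''(u)`. -/
noncomputable def U2 (h : ℝ) (f : ℝ → ℝ) (u : ℝ) : ℝ :=
  2 * kap h * u * f u + (h / 3 - 1) * u ^ 2 * d1 f u
    + (2 * u ^ 2 + u ^ 3) * Qf f u - u ^ 3 * d2 f u

/-- `V₁(u) = (2U₁(u) − U₂(u))/U₁(u)`. -/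
noncomputable def V1 (h : ℝ) (f : ℝ → ℝ) (u : ℝ) : ℝ :=
  (2 * U1 h f u - U2 h f u) / U1 h f u

/-- `V₂(u) = (κ(h) + β(f)) u / U₁(u)`. -/
noncomputable def V2 (h : ℝ) (f : ℝ → ℝ) (u : ℝ) : ℝ :=
  (kap h + d2 f 1) * u / U1 h f u

section Aux

variable {h M : ℝ} {f : ℝ → ℝ}

lemma uniqueDiffOn_Iset : UniqueDiffOn ℝ Iset := uniqueDiffOn_Icc (by norm_num)

lemma h_ne (hκ : 0 < kap h) : h ≠ 0 := by
  rintro rfl; norm_num [kap] at hκ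

lemma del_le_eighth : del h M ≤ 1/8 := by
  unfold del; split <;> exact min_le_left _ _

lemma del_le_habs : del h M ≤ 1 / (8 * |h|) := by
  unfold del; split
  · exact min_le_right _ _
  · exact le_trans (min_le_right _ _) (min_le_left _ _)

lemma del_pos (hκ : 0 < kap h) (hM : 0 ≤ M) : 0 < del h M := by
  have hh : 0 < |h| := abs_pos.2 (h_ne hκ)
  unfold del; split
  · exact lt_min (by norm_num) (by positivity)
  · rename_i hM0
    have : 0 < M := lt_of_le_of_ne hM (Ne.symm hM0)
    exact lt_min (by norm_num) (lt_min (by positivity) (by positivity))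

lemma habs_mul_del (hκ : 0 < kap h) : |h| * del h M ≤ 1/8 := by
  have hh : 0 < |h| := abs_pos.2 (h_ne hκ)
  have := mul_le_mul_of_nonneg_left (del_le_habs (h := h) (M := M)) hh.le
  calc |h| * del h M ≤ |h| * (1 / (8 * |h|)) := this
    _ = 1/8 := by field_simp

lemma M_mul_del (hM : 0 ≤ M) : M * del h M ≤ 1/8 := by
  rcases eq_or_lt_of_le hM with h0 | h0
  · rw [← h0]; norm_num
  · have hle : del h M ≤ 1 / (8 * M) := by
      unfold del; rw [if_neg h0.ne']
      exact le_trans (min_le_right _ _) (min_le_right _ _)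
    calc M * del h M ≤ M * (1 / (8 * M)) := mul_le_mul_of_nonneg_left hle h0.le
      _ = 1/8 := by field_simp

lemma Us (hM : 0 ≤ M) : Uset (del h M) ⊆ Iset := by
  have h8 : del h M ≤ 1/8 := del_le_eighth
  intro u hu
  simp only [Uset, Iset, Set.mem_Icc] at *
  constructor <;> linarith

lemma mem_abs {u : ℝ} (hu : u ∈ Uset (del h M)) : |u - 1| ≤ del h M := by
  obtain ⟨h1, h2⟩ := hu
  rw [abs_le]; constructor <;> linarith

lemma mem_bds (hM : 0 ≤ M) {u : ℝ} (hu : u ∈ Uset (del h M)) : 7/8 ≤ u ∧ u ≤ 9/8 := by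
  have := Us hM hu; exact ⟨this.1, this.2⟩

lemma one_mem_U (hκ : 0 < kap h) (hM : 0 ≤ M) : (1:ℝ) ∈ Uset (del h M) := by
  have := del_pos hκ hM
  exact ⟨by linarith, by linarith⟩

lemma uniqueDiffOn_U (hκ : 0 < kap h) (hM : 0 ≤ M) : UniqueDiffOn ℝ (Uset (del h M)) := by
  have := del_pos hκ hM
  exact uniqueDiffOn_Icc (by linarith)

lemma convex_U : Convex ℝ (Uset (del h M)) := convex_Icc _ _

lemma kap_del_sq (hκ : 0 < kap h) (hM : 0 ≤ M) : kap h * del h M ^ 2 ≤ 1/144 := by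
  have h1 : |h| * del h M ≤ 1/8 := habs_mul_del hκ
  have h2 : del h M ≤ 1/8 := del_le_eighth
  have h3 : 0 < del h M := del_pos hκ hM
  have h4 : 0 ≤ |h| := abs_nonneg h
  have h5 : h ≤ |h| := le_abs_self h
  have h6 : -|h| ≤ h := neg_abs_le h
  have h7 : h^2 = |h|^2 := (sq_abs h).symm
  set d := del h M
  have e1 : h^2 * d^2 ≤ 1/64 := by nlinarith [mul_le_mul h1 h1 (by positivity) (by norm_num : (0:ℝ) ≤ 1/8)]
  have e2 : -h * d^2 ≤ 1/64 := by nlinarith [mul_le_mul h1 h2 h3.le (by norm_num : (0:ℝ) ≤ 1/8)]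
  unfold kap
  nlinarith

-- Regularity
lemma smooth1 (hf : CM M f) : ContDiffOn ℝ 2 (d1 f) Iset :=
  hf.1.derivWithin uniqueDiffOn_Iset (by norm_num)

lemma smooth2 (hf : CM M f) : ContDiffOn ℝ 1 (d2 f) Iset :=
  (smooth1 hf).derivWithin uniqueDiffOn_Iset (by norm_num)

lemma smooth3 (hf : CM M f) : ContinuousOn (d3 f) Iset :=
  (smooth2 hf).continuousOn_derivWithin uniqueDiffOn_Iset le_rfl

lemma hdW1 (hf : CM M f) : ∀ x ∈ Iset, HasDerivWithinAt f (d1 f x) Iset x :=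
  fun x hx => ((hf.1.differentiableOn (by norm_num)) x hx).hasDerivWithinAt

lemma hdW2 (hf : CM M f) : ∀ x ∈ Iset, HasDerivWithinAt (d1 f) (d2 f x) Iset x :=
  fun x hx => (((smooth1 hf).differentiableOn (by norm_num)) x hx).hasDerivWithinAt

lemma hdW3 (hf : CM M f) : ∀ x ∈ Iset, HasDerivWithinAt (d2 f) (d3 f x) Iset x :=
  fun x hx => (((smooth2 hf).differentiableOn (by norm_num)) x hx).hasDerivWithinAt

-- restricted versions
lemma hdU1 (hM : 0 ≤ M) (hf : CM M f) : ∀ x ∈ Uset (del h M), HasDerivWithinAt f (d1 f x) (Uset (del h M)) x :=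
  fun x hx => (hdW1 hf x (Us hM hx)).mono (Us hM)

lemma hdU2 (hM : 0 ≤ M) (hf : CM M f) : ∀ x ∈ Uset (del h M), HasDerivWithinAt (d1 f) (d2 f x) (Uset (del h M)) x :=
  fun x hx => (hdW2 hf x (Us hM hx)).mono (Us hM)

lemma hdU3 (hM : 0 ≤ M) (hf : CM M f) : ∀ x ∈ Uset (del h M), HasDerivWithinAt (d2 f) (d3 f x) (Uset (del h M)) x :=
  fun x hx => (hdW3 hf x (Us hM hx)).mono (Us hM)

lemma b3 (hM : 0 ≤ M) (hf : CM M f) : ∀ u ∈ Uset (del h M), |d3 f u| ≤ M * d2 f 1 :=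
  fun u hu => hf.2.2.2.2 u (Us hM hu)

-- d2 is Lipschitz with constant M β on Uδ
lemma b2lip (hM : 0 ≤ M) (hf : CM M f) : ∀ u ∈ Uset (del h M), ∀ v ∈ Uset (del h M),
    |d2 f u - d2 f v| ≤ M * d2 f 1 * |u - v| := by
  intro u hu v hv
  have := convex_U.norm_image_sub_le_of_norm_hasDerivWithin_le
    (hdU3 hM hf) (fun x hx => by simpa [Real.norm_eq_abs] using b3 hM hf x hx) hv hu
  simpa [Real.norm_eq_abs] using this

lemma b2d (hκ : 0 < kap h) (hM : 0 ≤ M) (hf : CM M f) : ∀ u ∈ Uset (del h M),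
    |d2 f u - d2 f 1| ≤ d2 f 1 / 8 := by
  intro u hu
  have h1 := b2lip hM hf u hu 1 (one_mem_U hκ hM)
  have h2 := mem_abs hu
  have hβ := hf.2.2.2.1
  have h3 : M * del h M ≤ 1/8 := M_mul_del hM
  have h4 : 0 ≤ |u - 1| := abs_nonneg _
  nlinarith [mul_le_mul_of_nonneg_left h2 (mul_nonneg hM hβ.le),
    mul_le_mul_of_nonneg_left h3 hβ.le]

lemma b2ub (hκ : 0 < kap h) (hM : 0 ≤ M) (hf : CM M f) : ∀ u ∈ Uset (del h M),
    |d2 f u| ≤ 2 * d2 f 1 := by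
  intro u hu
  have h1 := b2d hκ hM hf u hu
  have hβ := hf.2.2.2.1
  rw [abs_le] at h1 ⊢; constructor <;> linarith

lemma b2lb (hκ : 0 < kap h) (hM : 0 ≤ M) (hf : CM M f) : ∀ u ∈ Uset (del h M),
    7 * d2 f 1 / 8 ≤ d2 f u := by
  intro u hu
  have h1 := abs_le.1 (b2d hκ hM hf u hu)
  linarith [h1.1]

lemma b1 (hκ : 0 < kap h) (hM : 0 ≤ M) (hf : CM M f) : ∀ u ∈ Uset (del h M),
    |d1 f u| ≤ 9 * d2 f 1 / 8 * |u - 1| := by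
  intro u hu
  have := convex_U.norm_image_sub_le_of_norm_hasDerivWithin_le
    (C := 9 * d2 f 1 / 8) (hdU2 hM hf) (fun x hx => by
      have h1 := abs_le.1 (b2d hκ hM hf x hx)
      have hβ := hf.2.2.2.1
      rw [Real.norm_eq_abs, abs_le]; constructor <;> linarith [h1.1, h1.2])
    (one_mem_U hκ hM) hu
  simpa [Real.norm_eq_abs, hf.2.2.1] using this

lemma b1ub (hκ : 0 < kap h) (hM : 0 ≤ M) (hf : CM M f) : ∀ u ∈ Uset (del h M),
    |d1 f u| ≤ d2 f 1 := by
  intro u hu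
  have h1 := b1 hκ hM hf u hu
  have h2 := mem_abs hu
  have hβ := hf.2.2.2.1
  have h3 : del h M ≤ 1/8 := del_le_eighth
  have h4 : 0 ≤ |u - 1| := abs_nonneg _
  nlinarith [mul_le_mul_of_nonneg_left h2 (by positivity : (0:ℝ) ≤ 9 * d2 f 1 / 8)]

lemma b0 (hκ : 0 < kap h) (hM : 0 ≤ M) (hf : CM M f) : ∀ u ∈ Uset (del h M),
    |f u - 1| ≤ 9 * d2 f 1 / 8 * del h M * |u - 1| := by
  intro u hu
  have := convex_U.norm_image_sub_le_of_norm_hasDerivWithin_le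
    (C := 9 * d2 f 1 / 8 * del h M) (hdU1 hM hf) (fun x hx => by
      have h1 := b1 hκ hM hf x hx
      have h2 := mem_abs hx
      have hβ := hf.2.2.2.1
      rw [Real.norm_eq_abs]
      nlinarith [abs_nonneg (x - 1)])
    (one_mem_U hκ hM) hu
  simpa [Real.norm_eq_abs, hf.2.1] using this

lemma b0ub (hκ : 0 < kap h) (hM : 0 ≤ M) (hf : CM M f) : ∀ u ∈ Uset (del h M),
    |f u| ≤ 1 + d2 f 1 := by
  intro u hu
  have h1 := b0 hκ hM hf u hu
  have h2 := mem_abs hu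
  have hβ := hf.2.2.2.1
  have h3 : del h M ≤ 1/8 := del_le_eighth
  have h4 : 0 ≤ |u - 1| := abs_nonneg _
  have h5 : 0 < del h M := del_pos hκ hM
  have h6 : |f u| - 1 ≤ |f u - 1| := by
    have := abs_sub_abs_le_abs_sub (f u) 1
    simpa using this
  nlinarith [mul_le_mul_of_nonneg_left h2 (by positivity : (0:ℝ) ≤ 9 * d2 f 1 / 8 * del h M),
    mul_le_mul_of_nonneg_left h3 (by positivity : (0:ℝ) ≤ 9 * d2 f 1 / 8)]

-- first-order Taylor for d1
lemma key1 (hκ : 0 < kap h) (hM : 0 ≤ M) (hf : CM M f) : ∀ u ∈ Uset (del h M),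
    |d1 f u - d2 f 1 * (u - 1)| ≤ M * d2 f 1 * del h M * |u - 1| := by
  intro u hu
  have hβ := hf.2.2.2.1
  have hder : ∀ x ∈ Uset (del h M), HasDerivWithinAt (fun s => d1 f s - d2 f 1 * s)
      (d2 f x - d2 f 1) (Uset (del h M)) x := by
    intro x hx
    have h2 : HasDerivWithinAt (fun s : ℝ => d2 f 1 * s) (d2 f 1) (Uset (del h M)) x := by
      simpa using ((hasDerivAt_id x).const_mul (d2 f 1)).hasDerivWithinAt
    exact (hdU2 hM hf x hx).sub h2
  have hbd : ∀ x ∈ Uset (del h M), ‖d2 f x - d2 f 1‖ ≤ M * d2 f 1 * del h M := by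
    intro x hx
    have h1 := b2lip hM hf x hx 1 (one_mem_U hκ hM)
    have h2 := mem_abs hx
    rw [Real.norm_eq_abs]
    nlinarith [mul_le_mul_of_nonneg_left h2 (mul_nonneg hM hβ.le)]
  have := convex_U.norm_image_sub_le_of_norm_hasDerivWithin_le hder hbd (one_mem_U hκ hM) hu
  rw [Real.norm_eq_abs, Real.norm_eq_abs] at this
  have heq : d1 f u - d2 f 1 * u - (d1 f 1 - d2 f 1 * 1) = d1 f u - d2 f 1 * (u - 1) := by
    rw [hf.2.2.1]; ring
  rwa [heq] at this

lemma uIcc_sub {u : ℝ} (hκ : 0 < kap h) (hM : 0 ≤ M) (hu : u ∈ Uset (del h M)) :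
    Set.uIcc 1 u ⊆ Uset (del h M) :=
  Set.ordConnected_Icc.uIcc_subset (one_mem_U hκ hM) hu

lemma uIcc_abs {u s : ℝ} (hs : s ∈ Set.uIcc 1 u) : |s - u| ≤ |u - 1| ∧ |s - 1| ≤ |u - 1| := by
  rcases le_total 1 u with hc | hc
  · rw [Set.uIcc_of_le hc] at hs
    obtain ⟨a1, a2⟩ := hs
    rw [abs_of_nonneg (by linarith : (0:ℝ) ≤ u - 1)]
    constructor
    · rw [abs_le]; constructor <;> linarith
    · rw [abs_le]; constructor <;> linarith
  · rw [Set.uIcc_of_ge hc] at hs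
    obtain ⟨a1, a2⟩ := hs
    rw [abs_of_nonpos (by linarith : u - 1 ≤ 0)]
    constructor
    · rw [abs_le]; constructor <;> linarith
    · rw [abs_le]; constructor <;> linarith

-- second divided-difference bound
lemma key2 (hκ : 0 < kap h) (hM : 0 ≤ M) (hf : CM M f) : ∀ u ∈ Uset (del h M),
    |(u - 1) * d2 f u - d1 f u| ≤ M * d2 f 1 * (u - 1) ^ 2 := by
  intro u hu
  have hβ := hf.2.2.2.1
  have hT := uIcc_sub hκ hM hu
  have hder : ∀ x ∈ Set.uIcc 1 u, HasDerivWithinAt (fun s => d1 f s - s * d2 f u)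
      (d2 f x - d2 f u) (Set.uIcc 1 u) x := by
    intro x hx
    exact ((hdU2 hM hf x (hT hx)).mono hT).sub ((hasDerivAt_mul_const (d2 f u)).hasDerivWithinAt)
  have hbd : ∀ x ∈ Set.uIcc 1 u, ‖d2 f x - d2 f u‖ ≤ M * d2 f 1 * |u - 1| := by
    intro x hx
    have h1 := b2lip hM hf x (hT hx) u hu
    have h2 := (uIcc_abs hx).1
    rw [Real.norm_eq_abs]
    nlinarith [mul_le_mul_of_nonneg_left h2 (mul_nonneg hM hβ.le)]
  have := (convex_uIcc (1:ℝ) u).norm_image_sub_le_of_norm_hasDerivWithin_le hder hbd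
    Set.left_mem_uIcc Set.right_mem_uIcc
  rw [Real.norm_eq_abs, Real.norm_eq_abs] at this
  have heq : d1 f u - u * d2 f u - (d1 f 1 - 1 * d2 f u) = -((u - 1) * d2 f u - d1 f u) := by
    rw [hf.2.2.1]; ring
  rw [heq, abs_neg] at this
  calc |(u - 1) * d2 f u - d1 f u| ≤ M * d2 f 1 * |u - 1| * |u - 1| := this
    _ = M * d2 f 1 * (u - 1) ^ 2 := by rw [mul_assoc, ← abs_mul, ← sq, abs_sq]

lemma bq (hκ : 0 < kap h) (hM : 0 ≤ M) (hf : CM M f) : ∀ u ∈ Uset (del h M),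
    |Qf f u - d2 f 1| ≤ M * d2 f 1 * del h M := by
  intro u hu
  have hβ := hf.2.2.2.1
  rcases eq_or_ne u 1 with rfl | hne
  · rw [Qf, if_pos rfl, sub_self, abs_zero]
    have := del_pos hκ hM
    positivity
  · have hv1 : u - 1 ≠ 0 := sub_ne_zero.2 hne
    have heq : Qf f u - d2 f 1 = (d1 f u - d2 f 1 * (u - 1)) / (u - 1) := by
      rw [Qf, if_neg hne]; field_simp
    rw [heq, abs_div, div_le_iff₀ (abs_pos.2 hv1)]
    exact key1 hκ hM hf u hu

lemma bqd (hκ : 0 < kap h) (hM : 0 ≤ M) (hf : CM M f) : ∀ u ∈ Uset (del h M),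
    |Qf f u - d2 f 1| ≤ d2 f 1 / 8 := by
  intro u hu
  have h1 := bq hκ hM hf u hu
  have h3 : M * del h M ≤ 1/8 := M_mul_del hM
  have hβ := hf.2.2.2.1
  nlinarith [mul_le_mul_of_nonneg_left h3 hβ.le]

lemma bqub (hκ : 0 < kap h) (hM : 0 ≤ M) (hf : CM M f) : ∀ u ∈ Uset (del h M),
    |Qf f u| ≤ 2 * d2 f 1 := by
  intro u hu
  have h1 := abs_le.1 (bqd hκ hM hf u hu)
  have hβ := hf.2.2.2.1
  rw [abs_le]; constructor <;> linarith [h1.1, h1.2]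

end Aux

noncomputable def qd (f : ℝ → ℝ) (u : ℝ) : ℝ :=
  if u = 1 then d3 f 1 / 2 else ((u - 1) * d2 f u - d1 f u) / (u - 1) ^ 2

section Aux2

variable {h M : ℝ} {f : ℝ → ℝ}

lemma one_mem_I : (1:ℝ) ∈ Iset := by constructor <;> norm_num

lemma qd_bound (hκ : 0 < kap h) (hM : 0 ≤ M) (hf : CM M f) : ∀ u ∈ Uset (del h M),
    |qd f u| ≤ M * d2 f 1 := by
  intro u hu
  rcases eq_or_ne u 1 with rfl | hne
  · rw [qd, if_pos rfl, abs_div]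
    have := hf.2.2.2.2 1 one_mem_I
    rw [abs_of_nonneg (by norm_num : (0:ℝ) ≤ 2)]
    rw [div_le_iff₀ (by norm_num : (0:ℝ) < 2)]
    nlinarith [abs_nonneg (d3 f 1), mul_nonneg hM hf.2.2.2.1.le]
  · have hv2 : (0:ℝ) < (u - 1)^2 := pow_two_pos_of_ne_zero (sub_ne_zero.2 hne)
    rw [qd, if_neg hne, abs_div, abs_of_nonneg hv2.le, div_le_iff₀ hv2]
    exact key2 hκ hM hf u hu

lemma hQd_ne (hκ : 0 < kap h) (hM : 0 ≤ M) (hf : CM M f) : ∀ u ∈ Uset (del h M), u ≠ 1 →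
    HasDerivWithinAt (Qf f) (qd f u) (Uset (del h M)) u := by
  intro u hu hne
  have hden : HasDerivWithinAt (fun v : ℝ => v - 1) 1 (Uset (del h M)) u :=
    ((hasDerivAt_id u).sub_const 1).hasDerivWithinAt
  have base := (hdU2 hM hf u hu).div hden (sub_ne_zero.2 hne)
  have hev : Qf f =ᶠ[nhdsWithin u (Uset (del h M))] (fun v => d1 f v / (v - 1)) := by
    have hmem : {v : ℝ | v ≠ 1} ∈ nhdsWithin u (Uset (del h M)) :=
      nhdsWithin_le_nhds (isOpen_compl_singleton.mem_nhds hne)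
    filter_upwards [hmem] with v hv
    rw [Qf, if_neg hv]
  have hx : Qf f u = d1 f u / (u - 1) := by rw [Qf, if_neg hne]
  have final := base.congr_of_eventuallyEq hev hx
  have heq : (d2 f u * (u - 1) - d1 f u * 1) / (u - 1) ^ 2 = qd f u := by
    rw [qd, if_neg hne]; ring_nf
  rwa [heq] at final

lemma key3 (hκ : 0 < kap h) (hM : 0 ≤ M) (hf : CM M f) : ∀ ε > 0, ∃ ν > 0,
    ∀ v ∈ Uset (del h M), |v - 1| < ν →
    |d2 f v - d2 f 1 - d3 f 1 * (v - 1)| ≤ ε * |v - 1| ∧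
    |d1 f v - d2 f 1 * (v - 1) - d3 f 1 / 2 * (v - 1) ^ 2| ≤ ε * (v - 1) ^ 2 := by
  intro ε hε
  have hc : ContinuousWithinAt (d3 f) (Uset (del h M)) 1 :=
    ((smooth3 hf).mono (Us hM)) 1 (one_mem_U hκ hM)
  rw [Metric.continuousWithinAt_iff] at hc
  obtain ⟨ν, hν, hν2⟩ := hc ε hε
  refine ⟨ν, hν, ?_⟩
  intro v hv hvν
  have hT := uIcc_sub hκ hM hv
  have est3 : ∀ s ∈ Set.uIcc 1 v, |d3 f s - d3 f 1| ≤ ε := by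
    intro s hs
    have h1 : dist s 1 < ν := by
      rw [Real.dist_eq]
      exact lt_of_le_of_lt (uIcc_abs hs).2 hvν
    have := hν2 (hT hs) h1
    rw [Real.dist_eq] at this
    exact this.le
  -- first MVT : ψ s = d2 f s - d3 f 1 * s
  have est2 : ∀ s ∈ Set.uIcc 1 v, |d2 f s - d2 f 1 - d3 f 1 * (s - 1)| ≤ ε * |s - 1| := by
    intro s hs
    have hder : ∀ x ∈ Set.uIcc 1 v, HasDerivWithinAt (fun t => d2 f t - d3 f 1 * t)
        (d3 f x - d3 f 1) (Set.uIcc 1 v) x := by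
      intro x hx
      have h2 : HasDerivWithinAt (fun t : ℝ => d3 f 1 * t) (d3 f 1) (Set.uIcc 1 v) x := by
        simpa using ((hasDerivAt_id x).const_mul (d3 f 1)).hasDerivWithinAt
      exact ((hdU3 hM hf x (hT hx)).mono hT).sub h2
    have hbd : ∀ x ∈ Set.uIcc 1 v, ‖d3 f x - d3 f 1‖ ≤ ε := by
      intro x hx; rw [Real.norm_eq_abs]; exact est3 x hx
    have := (convex_uIcc (1:ℝ) v).norm_image_sub_le_of_norm_hasDerivWithin_le hder hbd
      Set.left_mem_uIcc hs
    rw [Real.norm_eq_abs, Real.norm_eq_abs] at this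
    have heq : d2 f s - d3 f 1 * s - (d2 f 1 - d3 f 1 * 1)
        = d2 f s - d2 f 1 - d3 f 1 * (s - 1) := by ring
    rwa [heq] at this
  constructor
  · exact est2 v Set.right_mem_uIcc
  -- second MVT : φ s = d1 f s - d2 f 1 * s - d3 f 1 / 2 * (s-1)^2
  · have hder : ∀ x ∈ Set.uIcc 1 v, HasDerivWithinAt
        (fun t => d1 f t - d2 f 1 * t - d3 f 1 / 2 * (t - 1) ^ 2)
        (d2 f x - d2 f 1 - d3 f 1 * (x - 1)) (Set.uIcc 1 v) x := by
      intro x hx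
      have h2 : HasDerivWithinAt (fun t : ℝ => d2 f 1 * t) (d2 f 1) (Set.uIcc 1 v) x := by
        simpa using ((hasDerivAt_id x).const_mul (d2 f 1)).hasDerivWithinAt
      have h3 : HasDerivWithinAt (fun t : ℝ => d3 f 1 / 2 * (t - 1) ^ 2)
          (d3 f 1 * (x - 1)) (Set.uIcc 1 v) x := by
        have b1 : HasDerivAt (fun t : ℝ => (t - 1) ^ 2) (2 * (x - 1) ^ 1 * 1) x :=
          ((hasDerivAt_id x).sub_const 1).pow 2
        have b2 := (b1.const_mul (d3 f 1 / 2)).hasDerivWithinAt (s := Set.uIcc 1 v)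
        have : d3 f 1 / 2 * (2 * (x - 1) ^ 1 * 1) = d3 f 1 * (x - 1) := by ring
        rwa [this] at b2
      exact (((hdU2 hM hf x (hT hx)).mono hT).sub h2).sub h3
    have hbd : ∀ x ∈ Set.uIcc 1 v, ‖d2 f x - d2 f 1 - d3 f 1 * (x - 1)‖ ≤ ε * |v - 1| := by
      intro x hx
      rw [Real.norm_eq_abs]
      calc |d2 f x - d2 f 1 - d3 f 1 * (x - 1)| ≤ ε * |x - 1| := est2 x hx
        _ ≤ ε * |v - 1| := mul_le_mul_of_nonneg_left (uIcc_abs hx).2 hε.le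
    have := (convex_uIcc (1:ℝ) v).norm_image_sub_le_of_norm_hasDerivWithin_le hder hbd
      Set.left_mem_uIcc Set.right_mem_uIcc
    rw [Real.norm_eq_abs, Real.norm_eq_abs] at this
    have heq : d1 f v - d2 f 1 * v - d3 f 1 / 2 * (v - 1) ^ 2
        - (d1 f 1 - d2 f 1 * 1 - d3 f 1 / 2 * (1 - 1) ^ 2)
        = d1 f v - d2 f 1 * (v - 1) - d3 f 1 / 2 * (v - 1) ^ 2 := by
      rw [hf.2.2.1]; ring
    rw [heq] at this
    calc |d1 f v - d2 f 1 * (v - 1) - d3 f 1 / 2 * (v - 1) ^ 2|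
        ≤ ε * |v - 1| * |v - 1| := this
      _ = ε * (v - 1) ^ 2 := by rw [mul_assoc, ← abs_mul, ← sq, abs_sq]

lemma hQd_one (hκ : 0 < kap h) (hM : 0 ≤ M) (hf : CM M f) :
    HasDerivWithinAt (Qf f) (qd f 1) (Uset (del h M)) 1 := by
  rw [show qd f 1 = d3 f 1 / 2 from if_pos rfl]
  rw [hasDerivWithinAt_iff_isLittleO, Asymptotics.isLittleO_iff]
  intro ε hε
  obtain ⟨ν, hν, hkey⟩ := key3 hκ hM hf ε hε
  have h1 : ∀ᶠ v in nhdsWithin 1 (Uset (del h M)), v ∈ Uset (del h M) :=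
    eventually_mem_nhdsWithin
  have h2 : ∀ᶠ v in nhdsWithin 1 (Uset (del h M)), |v - 1| < ν := by
    have hb : ∀ᶠ v in nhds (1:ℝ), |v - 1| < ν := by
      filter_upwards [Metric.ball_mem_nhds (1:ℝ) hν] with v hv
      simpa [Real.dist_eq] using hv
    exact hb.filter_mono nhdsWithin_le_nhds
  filter_upwards [h1, h2] with v hv hvν
  rcases eq_or_ne v 1 with rfl | hne
  · simp
  · have hk := (hkey v hv hvν).2
    have hv1 : v - 1 ≠ 0 := sub_ne_zero.2 hne
    rw [Qf, if_neg hne, Qf, if_pos rfl, smul_eq_mul, Real.norm_eq_abs, Real.norm_eq_abs]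
    have heq : d1 f v / (v - 1) - d2 f 1 - (v - 1) * (d3 f 1 / 2)
        = (d1 f v - d2 f 1 * (v - 1) - d3 f 1 / 2 * (v - 1) ^ 2) / (v - 1) := by
      field_simp
    rw [heq, abs_div, div_le_iff₀ (abs_pos.2 hv1)]
    calc |d1 f v - d2 f 1 * (v - 1) - d3 f 1 / 2 * (v - 1) ^ 2|
        ≤ ε * (v - 1) ^ 2 := hk
      _ = ε * |v - 1| * |v - 1| := by rw [mul_assoc, ← abs_mul, ← sq, abs_sq]

lemma hQd (hκ : 0 < kap h) (hM : 0 ≤ M) (hf : CM M f) : ∀ u ∈ Uset (del h M),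
    HasDerivWithinAt (Qf f) (qd f u) (Uset (del h M)) u := by
  intro u hu
  rcases eq_or_ne u 1 with rfl | hne
  · exact hQd_one hκ hM hf
  · exact hQd_ne hκ hM hf u hu hne

lemma qd_cont (hκ : 0 < kap h) (hM : 0 ≤ M) (hf : CM M f) :
    ContinuousOn (qd f) (Uset (del h M)) := by
  intro u hu
  have hd1c : ContinuousWithinAt (d1 f) (Uset (del h M)) u :=
    (((smooth1 hf).continuousOn).mono (Us hM)) u hu
  have hd2c : ContinuousWithinAt (d2 f) (Uset (del h M)) u :=
    (((smooth2 hf).continuousOn).mono (Us hM)) u hu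
  rcases eq_or_ne u 1 with rfl | hne
  · -- continuity at 1
    rw [Metric.continuousWithinAt_iff]
    intro ε hε
    obtain ⟨ν, hν, hkey⟩ := key3 hκ hM hf (ε/4) (by positivity)
    refine ⟨ν, hν, ?_⟩
    intro v hv hvν
    rw [Real.dist_eq] at hvν ⊢
    rcases eq_or_ne v 1 with rfl | hne'
    · simpa using hε
    · obtain ⟨k1, k2⟩ := hkey v hv hvν
      have hv1 : v - 1 ≠ 0 := sub_ne_zero.2 hne'
      have hv2 : (0:ℝ) < (v - 1)^2 := pow_two_pos_of_ne_zero hv1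
      have heq : qd f v - qd f 1 = ((v - 1) * (d2 f v - d2 f 1 - d3 f 1 * (v - 1))
          - (d1 f v - d2 f 1 * (v - 1) - d3 f 1 / 2 * (v - 1) ^ 2)) / (v - 1) ^ 2 := by
        rw [qd, if_neg hne', qd, if_pos rfl]
        field_simp
        ring
      rw [heq, abs_div, abs_of_nonneg hv2.le, div_lt_iff₀ hv2]
      have t1 : |(v - 1) * (d2 f v - d2 f 1 - d3 f 1 * (v - 1))| ≤ |v - 1| * (ε/4 * |v - 1|) := by
        rw [abs_mul]
        exact mul_le_mul_of_nonneg_left k1 (abs_nonneg _)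
      have hs : |v - 1| * |v - 1| = (v - 1)^2 := by rw [← abs_mul, ← sq, abs_sq]
      have h3 := abs_sub ((v - 1) * (d2 f v - d2 f 1 - d3 f 1 * (v - 1)))
        (d1 f v - d2 f 1 * (v - 1) - d3 f 1 / 2 * (v - 1) ^ 2)
      nlinarith [mul_pos hε hv2]
  · -- continuity away from 1
    have hr : ContinuousWithinAt (fun v => ((v - 1) * d2 f v - d1 f v) / (v - 1) ^ 2)
        (Uset (del h M)) u := by
      apply ContinuousWithinAt.div
      · exact ((continuousWithinAt_id.sub continuousWithinAt_const).mul hd2c).sub hd1c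
      · exact (continuousWithinAt_id.sub continuousWithinAt_const).pow 2
      · exact pow_ne_zero _ (sub_ne_zero.2 hne)
    apply hr.congr_of_eventuallyEq
    · have hmem : {v : ℝ | v ≠ 1} ∈ nhdsWithin u (Uset (del h M)) :=
        nhdsWithin_le_nhds (isOpen_compl_singleton.mem_nhds hne)
      filter_upwards [hmem] with v hv
      rw [qd, if_neg hv]
    · rw [qd, if_neg hne]

lemma Q_contDiffOn (hκ : 0 < kap h) (hM : 0 ≤ M) (hf : CM M f) :
    ContDiffOn ℝ 1 (Qf f) (Uset (del h M)) := by
  have hd : DifferentiableOn ℝ (Qf f) (Uset (del h M)) :=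
    fun u hu => (hQd hκ hM hf u hu).differentiableWithinAt
  rw [show (1 : WithTop ℕ∞) = 0 + 1 from rfl,
    contDiffOn_succ_iff_derivWithin (uniqueDiffOn_U hκ hM)]
  refine ⟨hd, by simp, ?_⟩
  rw [contDiffOn_zero]
  apply (qd_cont hκ hM hf).congr
  intro u hu
  exact (hQd hκ hM hf u hu).derivWithin (uniqueDiffOn_U hκ hM u hu)

lemma Qd_eq (hκ : 0 < kap h) (hM : 0 ≤ M) (hf : CM M f) : ∀ u ∈ Uset (del h M),
    derivWithin (Qf f) (Uset (del h M)) u = qd f u :=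
  fun u hu => (hQd hκ hM hf u hu).derivWithin (uniqueDiffOn_U hκ hM u hu)

end Aux2

noncomputable def DU1 (h : ℝ) (f : ℝ → ℝ) (u : ℝ) : ℝ :=
  kap h * d1 f u + (2 * h / 3) * (d1 f u + u * d2 f u) + (2 * u * d2 f u + u ^ 2 * d3 f u)

noncomputable def DU2 (h : ℝ) (f : ℝ → ℝ) (u : ℝ) : ℝ :=
  2 * kap h * (f u + u * d1 f u) + (h / 3 - 1) * (2 * u * d1 f u + u ^ 2 * d2 f u)
    + (4 * u + 3 * u ^ 2) * Qf f u + (2 * u ^ 2 + u ^ 3) * qd f u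
    - (3 * u ^ 2 * d2 f u + u ^ 3 * d3 f u)

section Aux3

variable {h M : ℝ} {f : ℝ → ℝ}

lemma hasD_U1 (hκ : 0 < kap h) (hM : 0 ≤ M) (hf : CM M f) : ∀ u ∈ Uset (del h M),
    HasDerivWithinAt (U1 h f) (DU1 h f u) (Uset (del h M)) u := by
  intro u hu
  have hF := hdU1 hM hf u hu
  have h1 := hdU2 hM hf u hu
  have h2 := hdU3 hM hf u hu
  have e1 := hF.const_mul (kap h)
  have e2a : HasDerivWithinAt (fun y : ℝ => 2 * h / 3 * y) (2 * h / 3) (Uset (del h M)) u := by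
    simpa using ((hasDerivAt_id u).const_mul (2 * h / 3)).hasDerivWithinAt
  have e2 := e2a.mul h1
  have e3a : HasDerivWithinAt (fun y : ℝ => y ^ 2) (2 * u) (Uset (del h M)) u := by
    simpa using (hasDerivAt_pow 2 u).hasDerivWithinAt
  have e3 := e3a.mul h2
  have total := (e1.add e2).add e3
  have hval : kap h * d1 f u + (2 * h / 3 * d1 f u + 2 * h / 3 * u * d2 f u)
      + (2 * u * d2 f u + u ^ 2 * d3 f u) = DU1 h f u := by
    unfold DU1; ring
  rw [← hval]
  exact total

lemma hasD_U2 (hκ : 0 < kap h) (hM : 0 ≤ M) (hf : CM M f) : ∀ u ∈ Uset (del h M),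
    HasDerivWithinAt (U2 h f) (DU2 h f u) (Uset (del h M)) u := by
  intro u hu
  have hF := hdU1 hM hf u hu
  have h1 := hdU2 hM hf u hu
  have h2 := hdU3 hM hf u hu
  have hQ := hQd hκ hM hf u hu
  have t1a : HasDerivWithinAt (fun y : ℝ => 2 * kap h * y) (2 * kap h) (Uset (del h M)) u := by
    simpa using ((hasDerivAt_id u).const_mul (2 * kap h)).hasDerivWithinAt
  have t1 := t1a.mul hF
  have t2a : HasDerivWithinAt (fun y : ℝ => (h / 3 - 1) * y ^ 2) ((h / 3 - 1) * (2 * u))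
      (Uset (del h M)) u := by
    simpa using ((hasDerivAt_pow 2 u).const_mul (h / 3 - 1)).hasDerivWithinAt
  have t2 := t2a.mul h1
  have t3a : HasDerivWithinAt (fun y : ℝ => 2 * y ^ 2 + y ^ 3) (2 * (2 * u) + 3 * u ^ 2)
      (Uset (del h M)) u := by
    have p2 : HasDerivWithinAt (fun y : ℝ => 2 * y ^ 2) (2 * (2 * u)) (Uset (del h M)) u := by
      simpa using ((hasDerivAt_pow 2 u).const_mul 2).hasDerivWithinAt
    have p3 : HasDerivWithinAt (fun y : ℝ => y ^ 3) (3 * u ^ 2) (Uset (del h M)) u := by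
      simpa using (hasDerivAt_pow 3 u).hasDerivWithinAt
    exact p2.add p3
  have t3 := t3a.mul hQ
  have t4a : HasDerivWithinAt (fun y : ℝ => y ^ 3) (3 * u ^ 2) (Uset (del h M)) u := by
    simpa using (hasDerivAt_pow 3 u).hasDerivWithinAt
  have t4 := t4a.mul h2
  have total := ((t1.add t2).add t3).sub t4
  have hval : 2 * kap h * f u + 2 * kap h * u * d1 f u
      + ((h / 3 - 1) * (2 * u) * d1 f u + (h / 3 - 1) * u ^ 2 * d2 f u)
      + ((2 * (2 * u) + 3 * u ^ 2) * Qf f u + (2 * u ^ 2 + u ^ 3) * qd f u)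
      - (3 * u ^ 2 * d2 f u + u ^ 3 * d3 f u) = DU2 h f u := by
    unfold DU2; ring
  rw [← hval]
  exact total

lemma coer (hκ : 0 < kap h) (hM : 0 ≤ M) (hf : CM M f) : ∀ u ∈ Uset (del h M),
    kap h + d2 f 1 / 4 ≤ U1 h f u := by
  intro u hu
  have hβ := hf.2.2.2.1
  have hd := mem_abs hu
  obtain ⟨hul, huu⟩ := mem_bds hM hu
  have hδ8 : del h M ≤ 1/8 := del_le_eighth
  have hδ0 : 0 < del h M := del_pos hκ hM
  have hhd : |h| * del h M ≤ 1/8 := habs_mul_del hκ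
  have hkd : kap h * del h M ^ 2 ≤ 1/144 := kap_del_sq hκ hM
  have e0 := abs_le.1 (b0 hκ hM hf u hu)
  have e1 := b1 hκ hM hf u hu
  have e2 := b2lb hκ hM hf u hu
  have habs0 : 0 ≤ |u - 1| := abs_nonneg _
  -- κ f u ≥ κ - β/128
  have t1 : kap h - d2 f 1 / 128 ≤ kap h * f u := by
    have q0 : kap h * (f u - 1) ≥ -(kap h * (9 * d2 f 1 / 8 * del h M * |u - 1|)) := by
      nlinarith [mul_le_mul_of_nonneg_left e0.1 hκ.le]
    have q1 : kap h * (9 * d2 f 1 / 8 * del h M * |u - 1|)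
        ≤ 9 * d2 f 1 / 8 * (kap h * del h M ^ 2) := by
      nlinarith [mul_le_mul_of_nonneg_left hd (mul_nonneg (mul_nonneg (by positivity : (0:ℝ) ≤ 9 * d2 f 1 / 8) hκ.le) hδ0.le)]
    nlinarith [mul_le_mul_of_nonneg_left hkd (by positivity : (0:ℝ) ≤ 9 * d2 f 1 / 8)]
  -- |2h/3 u d1| ≤ 27β/256
  have t2 : |2 * h / 3 * u * d1 f u| ≤ 27 * d2 f 1 / 256 := by
    rw [abs_mul, abs_mul]
    have c1 : |2 * h / 3| = 2 / 3 * |h| := by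
      rw [show 2 * h / 3 = 2 / 3 * h by ring, abs_mul, abs_of_nonneg (by norm_num : (0:ℝ) ≤ 2/3)]
    have c2 : |u| ≤ 9/8 := by rw [abs_of_nonneg (by linarith)]; linarith
    have c3 : |d1 f u| ≤ 9 * d2 f 1 / 8 * del h M := by
      calc |d1 f u| ≤ 9 * d2 f 1 / 8 * |u - 1| := e1
        _ ≤ 9 * d2 f 1 / 8 * del h M := by gcongr
    calc |2 * h / 3| * |u| * |d1 f u| ≤ (2 / 3 * |h|) * (9/8) * (9 * d2 f 1 / 8 * del h M) := by
          rw [c1]; gcongr <;> positivity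
      _ = 27 / 32 * d2 f 1 * (|h| * del h M) := by ring
      _ ≤ 27 / 32 * d2 f 1 * (1/8) := by gcongr
      _ = 27 * d2 f 1 / 256 := by ring
  have t3a : (49:ℝ)/64 ≤ u ^ 2 := by nlinarith
  have t3 : 343 * d2 f 1 / 512 ≤ u ^ 2 * d2 f u := by
    nlinarith [mul_le_mul_of_nonneg_left e2 (by positivity : (0:ℝ) ≤ u ^ 2),
      mul_le_mul_of_nonneg_right t3a (by positivity : (0:ℝ) ≤ 7 * d2 f 1 / 8)]
  have t2' := neg_abs_le (2 * h / 3 * u * d1 f u)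
  unfold U1
  nlinarith [t1, t2, t3]

lemma U1_pos (hκ : 0 < kap h) (hM : 0 ≤ M) (hf : CM M f) : ∀ u ∈ Uset (del h M),
    0 < U1 h f u := by
  intro u hu
  have := coer hκ hM hf u hu
  have hβ := hf.2.2.2.1
  linarith

lemma U1_contDiffOn (hκ : 0 < kap h) (hM : 0 ≤ M) (hf : CM M f) :
    ContDiffOn ℝ 1 (U1 h f) (Uset (del h M)) := by
  have hfC : ContDiffOn ℝ 1 f (Uset (del h M)) := (hf.1.of_le (by norm_num)).mono (Us hM)
  have h1C : ContDiffOn ℝ 1 (d1 f) (Uset (del h M)) :=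
    ((smooth1 hf).of_le (by norm_num)).mono (Us hM)
  have h2C : ContDiffOn ℝ 1 (d2 f) (Uset (del h M)) := (smooth2 hf).mono (Us hM)
  exact ((contDiffOn_const.mul hfC).add
    ((contDiffOn_const.mul contDiffOn_id).mul h1C)).add ((contDiffOn_id.pow 2).mul h2C)

lemma U2_contDiffOn (hκ : 0 < kap h) (hM : 0 ≤ M) (hf : CM M f) :
    ContDiffOn ℝ 1 (U2 h f) (Uset (del h M)) := by
  have hfC : ContDiffOn ℝ 1 f (Uset (del h M)) := (hf.1.of_le (by norm_num)).mono (Us hM)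
  have h1C : ContDiffOn ℝ 1 (d1 f) (Uset (del h M)) :=
    ((smooth1 hf).of_le (by norm_num)).mono (Us hM)
  have h2C : ContDiffOn ℝ 1 (d2 f) (Uset (del h M)) := (smooth2 hf).mono (Us hM)
  have hQC := Q_contDiffOn hκ hM hf
  exact (((((contDiffOn_const.mul contDiffOn_id).mul hfC).add
    ((contDiffOn_const.mul (contDiffOn_id.pow 2)).mul h1C)).add
    (((contDiffOn_const.mul (contDiffOn_id.pow 2)).add (contDiffOn_id.pow 3)).mul hQC)).sub
    ((contDiffOn_id.pow 3).mul h2C))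

lemma U1_one (hf : CM M f) : U1 h f 1 = kap h + d2 f 1 := by
  unfold U1; rw [hf.2.1, hf.2.2.1]; ring

lemma U2_one (hf : CM M f) : U2 h f 1 = 2 * kap h + 2 * d2 f 1 := by
  unfold U2; rw [hf.2.1, hf.2.2.1, Qf, if_pos rfl]; ring

-- magnitude helpers
lemma abs_mul2_le {a b A B : ℝ} (ha : |a| ≤ A) (hb : |b| ≤ B) : |a * b| ≤ A * B := by
  rw [abs_mul]
  exact mul_le_mul ha hb (abs_nonneg _) ((abs_nonneg a).trans ha)

lemma abs_mul3_le {a b c A B C : ℝ} (ha : |a| ≤ A) (hb : |b| ≤ B) (hc : |c| ≤ C) :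
    |a * b * c| ≤ A * B * C :=
  abs_mul2_le (abs_mul2_le ha hb) hc

lemma abs_add2_le {a b A B : ℝ} (ha : |a| ≤ A) (hb : |b| ≤ B) : |a + b| ≤ A + B :=
  (abs_add_le _ _).trans (add_le_add ha hb)

lemma abs_sub2_le {a b A B : ℝ} (ha : |a| ≤ A) (hb : |b| ≤ B) : |a - b| ≤ A + B :=
  (abs_sub _ _).trans (add_le_add ha hb)

lemma cu_bounds (hM : 0 ≤ M) {u : ℝ} (hu : u ∈ Uset (del h M)) :
    |u| ≤ 2 ∧ |u ^ 2| ≤ 4 ∧ |u ^ 3| ≤ 8 := by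
  obtain ⟨hul, huu⟩ := mem_bds hM hu
  have cu : |u| ≤ 2 := by rw [abs_of_nonneg (by linarith)]; linarith
  have h0 : 0 ≤ |u| := abs_nonneg u
  constructor
  · exact cu
  constructor
  · rw [abs_pow]; nlinarith
  · rw [abs_pow]
    nlinarith [mul_nonneg (sub_nonneg.2 cu) (by positivity : (0:ℝ) ≤ |u|^2 + 2*|u| + 4)]

lemma habs23 : |2 * h / 3| ≤ |h| := by
  rw [show 2 * h / 3 = 2/3 * h by ring, abs_mul, abs_of_nonneg (by norm_num : (0:ℝ) ≤ 2/3)]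
  nlinarith [abs_nonneg h]

lemma habs31 : |h / 3 - 1| ≤ |h| + 1 := by
  have h2 : |h / 3| ≤ |h| := by
    rw [show h / 3 = 1/3 * h by ring, abs_mul, abs_of_nonneg (by norm_num : (0:ℝ) ≤ 1/3)]
    nlinarith [abs_nonneg h]
  calc |h / 3 - 1| ≤ |h/3| + |(1:ℝ)| := abs_sub _ _
    _ ≤ |h| + 1 := by rw [abs_one]; linarith

lemma bU1 (hκ : 0 < kap h) (hM : 0 ≤ M) (hf : CM M f) : ∀ u ∈ Uset (del h M),
    |U1 h f u| ≤ 100 * (kap h + |h| + M + 1) * (1 + d2 f 1) := by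
  intro u hu
  have hβ := hf.2.2.2.1
  have c0 := b0ub hκ hM hf u hu
  have c1 := b1ub hκ hM hf u hu
  have c2 := b2ub hκ hM hf u hu
  obtain ⟨cu, cu2, cu3⟩ := cu_bounds hM hu
  have aκ : |kap h| ≤ kap h := le_of_eq (abs_of_nonneg hκ.le)
  have T : |U1 h f u| ≤ kap h * (1 + d2 f 1) + |h| * 2 * d2 f 1 + 4 * (2 * d2 f 1) :=
    abs_add2_le (abs_add2_le (abs_mul2_le aκ c0) (abs_mul3_le habs23 cu c1))
      (abs_mul2_le cu2 c2)
  nlinarith [abs_nonneg h, hκ.le, hM, hβ.le, mul_nonneg hκ.le hβ.le,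
    mul_nonneg (abs_nonneg h) hβ.le, mul_nonneg hM hβ.le]

lemma bU2 (hκ : 0 < kap h) (hM : 0 ≤ M) (hf : CM M f) : ∀ u ∈ Uset (del h M),
    |U2 h f u| ≤ 100 * (kap h + |h| + M + 1) * (1 + d2 f 1) := by
  intro u hu
  have hβ := hf.2.2.2.1
  have c0 := b0ub hκ hM hf u hu
  have c1 := b1ub hκ hM hf u hu
  have c2 := b2ub hκ hM hf u hu
  have cq := bqub hκ hM hf u hu
  obtain ⟨cu, cu2, cu3⟩ := cu_bounds hM hu
  have aκ2 : |2 * kap h| ≤ 2 * kap h := by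
    rw [abs_mul, abs_of_nonneg hκ.le, abs_of_nonneg (by norm_num : (0:ℝ) ≤ 2)]
  have a4 : |2 * u ^ 2 + u ^ 3| ≤ 2 * 4 + 8 :=
    abs_add2_le (abs_mul2_le (by norm_num) cu2) cu3
  have T : |U2 h f u| ≤ ((2 * kap h * 2 * (1 + d2 f 1)
      + (|h| + 1) * 4 * d2 f 1) + (2 * 4 + 8) * (2 * d2 f 1)) + 8 * (2 * d2 f 1) :=
    abs_sub2_le (abs_add2_le (abs_add2_le (abs_mul3_le aκ2 cu c0)
      (abs_mul3_le habs31 cu2 c1)) (abs_mul2_le a4 cq)) (abs_mul2_le cu3 c2)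
  nlinarith [abs_nonneg h, hκ.le, hM, hβ.le, mul_nonneg hκ.le hβ.le,
    mul_nonneg (abs_nonneg h) hβ.le, mul_nonneg hM hβ.le]

lemma bDU1 (hκ : 0 < kap h) (hM : 0 ≤ M) (hf : CM M f) : ∀ u ∈ Uset (del h M),
    |DU1 h f u| ≤ 100 * (kap h + |h| + M + 1) * (1 + d2 f 1) := by
  intro u hu
  have hβ := hf.2.2.2.1
  have c1 := b1ub hκ hM hf u hu
  have c2 := b2ub hκ hM hf u hu
  have c3 := b3 hM hf u hu
  obtain ⟨cu, cu2, cu3⟩ := cu_bounds hM hu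
  have aκ : |kap h| ≤ kap h := le_of_eq (abs_of_nonneg hκ.le)
  have a1 : |2 * u| ≤ 2 * 2 := abs_mul2_le (by norm_num) cu
  have T : |DU1 h f u| ≤ (kap h * d2 f 1
      + |h| * (d2 f 1 + 2 * (2 * d2 f 1))) + (2 * 2 * (2 * d2 f 1) + 4 * (M * d2 f 1)) :=
    abs_add2_le (abs_add2_le (abs_mul2_le aκ c1)
      (abs_mul2_le habs23 (abs_add2_le c1 (abs_mul2_le cu c2))))
      (abs_add2_le (abs_mul2_le a1 c2) (abs_mul2_le cu2 c3))
  nlinarith [abs_nonneg h, hκ.le, hM, hβ.le, mul_nonneg hκ.le hβ.le,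
    mul_nonneg (abs_nonneg h) hβ.le, mul_nonneg hM hβ.le]

lemma bDU2 (hκ : 0 < kap h) (hM : 0 ≤ M) (hf : CM M f) : ∀ u ∈ Uset (del h M),
    |DU2 h f u| ≤ 100 * (kap h + |h| + M + 1) * (1 + d2 f 1) := by
  intro u hu
  have hβ := hf.2.2.2.1
  have c0 := b0ub hκ hM hf u hu
  have c1 := b1ub hκ hM hf u hu
  have c2 := b2ub hκ hM hf u hu
  have c3 := b3 hM hf u hu
  have cq := bqub hκ hM hf u hu
  have cqd := qd_bound hκ hM hf u hu
  obtain ⟨cu, cu2, cu3⟩ := cu_bounds hM hu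
  have aκ2 : |2 * kap h| ≤ 2 * kap h := by
    rw [abs_mul, abs_of_nonneg hκ.le, abs_of_nonneg (by norm_num : (0:ℝ) ≤ 2)]
  have a1 : |2 * u| ≤ 2 * 2 := abs_mul2_le (by norm_num) cu
  have a4 : |2 * u ^ 2 + u ^ 3| ≤ 2 * 4 + 8 :=
    abs_add2_le (abs_mul2_le (by norm_num) cu2) cu3
  have a5 : |4 * u + 3 * u ^ 2| ≤ 4 * 2 + 3 * 4 :=
    abs_add2_le (abs_mul2_le (by norm_num) cu) (abs_mul2_le (by norm_num) cu2)
  have T : |DU2 h f u| ≤ (((2 * kap h * ((1 + d2 f 1) + 2 * d2 f 1)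
      + (|h| + 1) * (2 * 2 * d2 f 1 + 4 * (2 * d2 f 1)))
      + (4 * 2 + 3 * 4) * (2 * d2 f 1)) + (2 * 4 + 8) * (M * d2 f 1))
      + (3 * 4 * (2 * d2 f 1) + 8 * (M * d2 f 1)) :=
    abs_sub2_le (abs_add2_le (abs_add2_le (abs_add2_le
      (abs_mul2_le aκ2 (abs_add2_le c0 (abs_mul2_le cu c1)))
      (abs_mul2_le habs31 (abs_add2_le (abs_mul2_le a1 c1) (abs_mul2_le cu2 c2))))
      (abs_mul2_le a5 cq)) (abs_mul2_le a4 cqd))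
      (abs_add2_le (abs_mul3_le (by norm_num) cu2 c2) (abs_mul2_le cu3 c3))
  nlinarith [abs_nonneg h, hκ.le, hM, hβ.le, mul_nonneg hκ.le hβ.le,
    mul_nonneg (abs_nonneg h) hβ.le, mul_nonneg hM hβ.le]

end Aux3


set_option maxHeartbeats 1000000 in
/-- coercivity of `U₁` and uniform C¹ bounds for `V₁, V₂` on `U(δ)`,
with a constant depending only on `h` and `M`. -/
theorem coefficients_coercivity_and_bounds
    (h M : ℝ) (hκ : 0 < kap h) (hM : 0 ≤ M) :
    ∃ C₀ : ℝ, ∀ f : ℝ → ℝ, CM M f →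
      -- (i) coercivity
      (∀ u ∈ Uset (del h M), kap h + d2 f 1 / 4 ≤ U1 h f u) ∧
      -- (ii) V₁, V₂ are well-defined C¹ functions on U(δ) with the stated values
      ContDiffOn ℝ 1 (V1 h f) (Uset (del h M)) ∧
      ContDiffOn ℝ 1 (V2 h f) (Uset (del h M)) ∧
      V1 h f 1 = 0 ∧ V2 h f 1 = 1 ∧
      (∀ u ∈ Uset (del h M), 0 < V2 h f u) ∧
      -- (iii) uniform bounds depending only on h and M
      (∀ u ∈ Uset (del h M),
        |V1 h f u| ≤ C₀ ∧ |V2 h f u| ≤ C₀ ∧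
        |derivWithin (V1 h f) (Uset (del h M)) u| ≤ C₀ ∧
        |derivWithin (V2 h f) (Uset (del h M)) u| ≤ C₀) := by
  refine ⟨6 * (100 * (kap h + |h| + M + 1))^2 * (1 / kap h + 4)^2
    + 9 * (100 * (kap h + |h| + M + 1)) * (1 / kap h + 4) + 100, ?_⟩
  intro f hf
  set K := 100 * (kap h + |h| + M + 1) with hKdef
  set G := 1 / kap h + 4 with hGdef
  have hβ : 0 < d2 f 1 := hf.2.2.2.1
  have hK : (100:ℝ) ≤ K := by rw [hKdef]; nlinarith [abs_nonneg h]
  have hK0 : (0:ℝ) < K := by linarith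
  have hG4 : (4:ℝ) ≤ G := by
    have : 0 < 1 / kap h := one_div_pos.2 hκ
    rw [hGdef]; linarith
  have hG0 : (0:ℝ) < G := by linarith
  have hU1C := U1_contDiffOn hκ hM hf
  have hU2C := U2_contDiffOn hκ hM hf
  have hne : ∀ u ∈ Uset (del h M), U1 h f u ≠ 0 :=
    fun u hu => (U1_pos hκ hM hf u hu).ne'
  refine ⟨coer hκ hM hf, ?_, ?_, ?_, ?_, ?_, ?_⟩
  · exact ((contDiffOn_const.mul hU1C).sub hU2C).div hU1C hne
  · exact (contDiffOn_const.mul contDiffOn_id).div hU1C hne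
  · unfold V1
    rw [U1_one hf, U2_one hf,
      show 2 * (kap h + d2 f 1) - (2 * kap h + 2 * d2 f 1) = 0 by ring, zero_div]
  · unfold V2
    rw [U1_one hf, mul_one, div_self (by linarith : kap h + d2 f 1 ≠ 0)]
  · intro u hu
    unfold V2
    apply div_pos _ (U1_pos hκ hM hf u hu)
    have := (mem_bds hM hu).1
    nlinarith
  · intro u hu
    have hco := coer hκ hM hf u hu
    have hD := U1_pos hκ hM hf u hu
    have hbu1 := bU1 hκ hM hf u hu
    have hbu2 := bU2 hκ hM hf u hu
    have hbd1 := bDU1 hκ hM hf u hu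
    have hbd2 := bDU2 hκ hM hf u hu
    obtain ⟨cu, cu2, cu3⟩ := cu_bounds hM hu
    have hG1 : 1 + d2 f 1 ≤ G * U1 h f u := by
      have q1 : (1 / kap h) * (kap h + d2 f 1 / 4) ≤ (1 / kap h) * U1 h f u :=
        mul_le_mul_of_nonneg_left hco (one_div_nonneg.2 hκ.le)
      have q2 : (1 / kap h) * kap h = 1 := by field_simp
      have q3 : 4 * (kap h + d2 f 1 / 4) ≤ 4 * U1 h f u := by linarith
      have q4 : 0 ≤ (1 / kap h) * (d2 f 1 / 4) :=
        mul_nonneg (one_div_nonneg.2 hκ.le) (by linarith)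
      rw [hGdef]
      nlinarith
    have h1β : (0:ℝ) ≤ 1 + d2 f 1 := by linarith
    -- numerator bounds
    have hN : |2 * U1 h f u - U2 h f u| ≤ 3 * K * (1 + d2 f 1) := by
      have := abs_sub2_le (abs_mul2_le (by norm_num : |(2:ℝ)| ≤ 2) hbu1) hbu2
      nlinarith [mul_nonneg hK0.le h1β]
    have hN' : |2 * DU1 h f u - DU2 h f u| ≤ 3 * K * (1 + d2 f 1) := by
      have := abs_sub2_le (abs_mul2_le (by norm_num : |(2:ℝ)| ≤ 2) hbd1) hbd2
      nlinarith [mul_nonneg hK0.le h1β]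
    have hκβ : kap h + d2 f 1 ≤ 4 * U1 h f u := by nlinarith
    refine ⟨?_, ?_, ?_, ?_⟩
    · -- |V1|
      unfold V1
      rw [abs_div, abs_of_pos hD, div_le_iff₀ hD]
      calc |2 * U1 h f u - U2 h f u| ≤ 3 * K * (1 + d2 f 1) := hN
        _ ≤ 3 * K * (G * U1 h f u) :=
            mul_le_mul_of_nonneg_left hG1 (by linarith : (0:ℝ) ≤ 3 * K)
        _ ≤ (6 * K^2 * G^2 + 9 * K * G + 100) * U1 h f u := by nlinarith [sq_nonneg (K*G)]
    · -- |V2|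
      unfold V2
      rw [abs_div, abs_of_pos hD, div_le_iff₀ hD]
      have e1 : |(kap h + d2 f 1) * u| ≤ (kap h + d2 f 1) * 2 :=
        abs_mul2_le (le_of_eq (abs_of_pos (by linarith))) cu
      calc |(kap h + d2 f 1) * u| ≤ (kap h + d2 f 1) * 2 := e1
        _ ≤ 8 * U1 h f u := by linarith
        _ ≤ (6 * K^2 * G^2 + 9 * K * G + 100) * U1 h f u := by
            nlinarith [mul_nonneg (mul_nonneg hK0.le hK0.le) (mul_nonneg hG0.le hG0.le),
              mul_nonneg hK0.le hG0.le]
    · -- |V1'|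
      have hdV1 : HasDerivWithinAt (V1 h f)
          (((2 * DU1 h f u - DU2 h f u) * U1 h f u
            - (2 * U1 h f u - U2 h f u) * DU1 h f u) / U1 h f u ^ 2)
          (Uset (del h M)) u := by
        have hn := ((hasD_U1 hκ hM hf u hu).const_mul 2).sub (hasD_U2 hκ hM hf u hu)
        exact hn.div (hasD_U1 hκ hM hf u hu) hD.ne'
      rw [hdV1.derivWithin (uniqueDiffOn_U hκ hM u hu)]
      rw [abs_div, abs_of_pos (pow_pos hD 2), div_le_iff₀ (pow_pos hD 2)]
      have hGG : (1 + d2 f 1) * (1 + d2 f 1) ≤ (G * U1 h f u) * (G * U1 h f u) :=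
        mul_le_mul hG1 hG1 h1β (mul_nonneg hG0.le hD.le)
      calc |(2 * DU1 h f u - DU2 h f u) * U1 h f u
          - (2 * U1 h f u - U2 h f u) * DU1 h f u|
          ≤ 3 * K * (1 + d2 f 1) * (K * (1 + d2 f 1))
            + 3 * K * (1 + d2 f 1) * (K * (1 + d2 f 1)) := by
            have e1 : |U1 h f u| ≤ K * (1 + d2 f 1) := hbu1
            exact abs_sub2_le (abs_mul2_le hN' e1) (abs_mul2_le hN hbd1)
        _ = 6 * K^2 * ((1 + d2 f 1) * (1 + d2 f 1)) := by ring
        _ ≤ 6 * K^2 * ((G * U1 h f u) * (G * U1 h f u)) :=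
            mul_le_mul_of_nonneg_left hGG (by nlinarith [sq_nonneg K] : (0:ℝ) ≤ 6 * K^2)
        _ = 6 * K^2 * G^2 * U1 h f u ^ 2 := by ring
        _ ≤ (6 * K^2 * G^2 + 9 * K * G + 100) * U1 h f u ^ 2 := by
            nlinarith [mul_nonneg (mul_nonneg hK0.le hG0.le) (sq_nonneg (U1 h f u)),
              sq_nonneg (U1 h f u)]
    · -- |V2'|
      have hnum : HasDerivWithinAt (fun y : ℝ => (kap h + d2 f 1) * y)
          (kap h + d2 f 1) (Uset (del h M)) u := by
        simpa using ((hasDerivAt_id u).const_mul (kap h + d2 f 1)).hasDerivWithinAt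
      have hdV2 : HasDerivWithinAt (V2 h f)
          (((kap h + d2 f 1) * U1 h f u
            - (kap h + d2 f 1) * u * DU1 h f u) / U1 h f u ^ 2)
          (Uset (del h M)) u := hnum.div (hasD_U1 hκ hM hf u hu) hD.ne'
      rw [hdV2.derivWithin (uniqueDiffOn_U hκ hM u hu)]
      rw [abs_div, abs_of_pos (pow_pos hD 2), div_le_iff₀ (pow_pos hD 2)]
      have e0 : |kap h + d2 f 1| ≤ 4 * U1 h f u := by
        rw [abs_of_pos (by linarith : (0:ℝ) < kap h + d2 f 1)]; exact hκβ
      calc |(kap h + d2 f 1) * U1 h f u - (kap h + d2 f 1) * u * DU1 h f u|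
          ≤ 4 * U1 h f u * (K * (1 + d2 f 1))
            + 4 * U1 h f u * 2 * (K * (1 + d2 f 1)) := by
            exact abs_sub2_le (abs_mul2_le e0 hbu1) (abs_mul3_le e0 cu hbd1)
        _ = 12 * K * (U1 h f u * (1 + d2 f 1)) := by ring
        _ ≤ 12 * K * (U1 h f u * (G * U1 h f u)) :=
            mul_le_mul_of_nonneg_left
              (mul_le_mul_of_nonneg_left hG1 hD.le) (by linarith : (0:ℝ) ≤ 12 * K)
        _ = 12 * K * G * U1 h f u ^ 2 := by ring
        _ ≤ (6 * K^2 * G^2 + 9 * K * G + 100) * U1 h f u ^ 2 := by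
            nlinarith [sq_nonneg (U1 h f u), mul_nonneg (mul_nonneg hK0.le hG0.le) (sq_nonneg (U1 h f u)),
              mul_nonneg (mul_nonneg (mul_nonneg hK0.le hK0.le) (mul_nonneg hG0.le hG0.le)) (sq_nonneg (U1 h f u))]
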